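/- Let Θ ⊆ ℝ^i and Θ̃ ⊆ ℝ^j be open sets with i ≤ j, let g : Θ̃ → Θ be twice differentiable with surjective Jacobian at every point and with g(Θ̃) = Θ, let f : Θ → ℝ be twice continuously differentiable, and set f̃ = f ∘ g. Then f̃ has a local maximum at a point θ̃ ∈ Θ̃ if and only if f has a local maximum at θ = g(θ̃). -/

import Mathlib

open Set Topology

/-- Proposition 3 (local maximum correspondence): `f̃ = f ∘ g` has a local maximum
at `θ̃ ∈ Θ̃` iff `f` has a local maximum at `θ = g θ̃`. -/
theorem local_max_iff_local_max
    (i j : ℕ) (hij : i ≤ j)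
    (Θ : Set (EuclideanSpace ℝ (Fin i))) (Θt : Set (EuclideanSpace ℝ (Fin j)))
    (hΘ : IsOpen Θ) (hΘt : IsOpen Θt)
    (g : EuclideanSpace ℝ (Fin j) → EuclideanSpace ℝ (Fin i))
    (hg1 : ∀ x ∈ Θt, DifferentiableAt ℝ g x)
    (hg2 : ∀ x ∈ Θt, DifferentiableAt ℝ (fderiv ℝ g) x)
    (hsub : ∀ x ∈ Θt, Function.Surjective (fderiv ℝ g x))
    (himg : g '' Θt = Θ)
    (f : EuclideanSpace ℝ (Fin i) → ℝ)
    (hf : ContDiffOn ℝ 2 f Θ)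
    (θt : EuclideanSpace ℝ (Fin j)) (hθt : θt ∈ Θt) :
    IsLocalMaxOn (f ∘ g) Θt θt ↔ IsLocalMaxOn f Θ (g θt) := by
  have hθ : g θt ∈ Θ := himg ▸ ⟨θt, hθt, rfl⟩
  have hn1 : 𝓝[Θt] θt = 𝓝 θt := nhdsWithin_eq_nhds.2 (hΘt.mem_nhds hθt)
  have hn2 : 𝓝[Θ] (g θt) = 𝓝 (g θt) := nhdsWithin_eq_nhds.2 (hΘ.mem_nhds hθ)
  -- g is C¹ at θt, hence strictly differentiable
  have hc1 : ContDiffAt ℝ 1 g θt := by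
    rw [contDiffAt_one_iff]
    exact ⟨fderiv ℝ g, Θt, hΘt.mem_nhds hθt,
      fun x hx => (hg2 x hx).continuousAt.continuousWithinAt,
      fun x hx => (hg1 x hx).hasFDerivAt⟩
  have hstrict : HasStrictFDerivAt g (fderiv ℝ g θt) θt :=
    hc1.hasStrictFDerivAt one_ne_zero
  have hmap : Filter.map g (𝓝 θt) = 𝓝 (g θt) :=
    hstrict.map_nhds_eq_of_surj (LinearMap.range_eq_top.2 (hsub θt hθt))
  unfold IsLocalMaxOn IsMaxFilter
  rw [hn1, hn2, ← hmap, Filter.eventually_map]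
  rfl
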